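/- Let ω be a radial weight (nonnegative integrable function on [0,1)) with tail integral ŵ(r) = ∫_r^1 ω(s) ds > 0 for all r ∈ [0,1). If there exists C ≥ 1 such that ŵ(r) ≤ C·ŵ((1+r)/2) for all 0 ≤ r < 1, then there exist constants C' ≥ 1 and β > 0 such that ŵ(r) ≤ C'·((1-r)/(1-t))^β · ŵ(t) for all 0 ≤ r ≤ t < 1. -/

import Mathlib

open MeasureTheory Set

/-- The tail integral of a radial weight. -/
noncomputable def tl (ω : ℝ → ℝ) (r : ℝ) : ℝ := ∫ s in r..1, ω s

theorem stmt0 (ω : ℝ → ℝ)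
    (hnn : ∀ t ∈ Ico (0:ℝ) 1, 0 ≤ ω t)
    (hint : IntegrableOn ω (Ico (0:ℝ) 1))
    (hpos : ∀ r ∈ Ico (0:ℝ) 1, 0 < tl ω r)
    (C : ℝ) (hC : 1 ≤ C)
    (hdbl : ∀ r ∈ Ico (0:ℝ) 1, tl ω r ≤ C * tl ω ((1 + r) / 2)) :
    ∃ C' ≥ (1:ℝ), ∃ β > (0:ℝ), ∀ r t : ℝ, 0 ≤ r → r ≤ t → t < 1 →
      tl ω r ≤ C' * ((1 - r) / (1 - t)) ^ β * tl ω t := by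
  -- integrability on Ioc 0 1
  have hint' : IntegrableOn ω (Ioc (0:ℝ) 1) := by
    rw [integrableOn_Ioc_iff_integrableOn_Ioo]
    exact hint.mono_set Ioo_subset_Ico_self
  have hii : ∀ a b : ℝ, 0 ≤ a → b ≤ 1 → a ≤ b → IntervalIntegrable ω volume a b := by
    intro a b ha hb hab
    rw [intervalIntegrable_iff]
    refine hint'.mono_set ?_
    rw [uIoc_of_le hab]
    exact Ioc_subset_Ioc ha hb
  -- monotonicity of tl
  have hmono : ∀ a b : ℝ, 0 ≤ a → a ≤ b → b ≤ 1 → tl ω b ≤ tl ω a := by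
    intro a b ha hab hb
    have hsplit : tl ω a = (∫ s in a..b, ω s) + tl ω b := by
      unfold tl
      rw [intervalIntegral.integral_add_adjacent_intervals (hii a b ha hb hab)
        (hii b 1 (ha.trans hab) le_rfl hb)]
    have hnngeq : 0 ≤ ∫ s in a..b, ω s := by
      refine intervalIntegral.integral_nonneg_of_ae_restrict hab ?_
      have h1 : ∀ᵐ x ∂(volume.restrict (Icc a b)), x ∈ Icc a b :=
        ae_restrict_mem measurableSet_Icc
      have h2 : ∀ᵐ x ∂(volume.restrict (Icc a b)), x ≠ 1 := by
        refine ae_iff.2 (measure_mono_null (t := {(1:ℝ)})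
          (fun x hx => by simpa using hx) (le_antisymm ?_ zero_le))
        calc (volume.restrict (Icc a b)) {1} ≤ volume {(1:ℝ)} :=
              Measure.restrict_le_self _
          _ = 0 := measure_singleton 1
      filter_upwards [h1, h2] with x hx hx1
      exact hnn x ⟨ha.trans hx.1, lt_of_le_of_ne (hx.2.trans hb) hx1⟩
    linarith
  set C₀ : ℝ := max C 2 with hC₀def
  have hC₀2 : (2:ℝ) ≤ C₀ := le_max_right _ _
  have hC₀1 : (1:ℝ) < C₀ := by linarith
  have hC₀0 : (0:ℝ) < C₀ := by linarith
  -- doubling with C₀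
  have hdbl' : ∀ r ∈ Ico (0:ℝ) 1, tl ω r ≤ C₀ * tl ω ((1 + r) / 2) := by
    intro r hr
    refine (hdbl r hr).trans ?_
    have hmem : (1 + r) / 2 ∈ Ico (0:ℝ) 1 := by
      constructor
      · linarith [hr.1]
      · linarith [hr.2]
    have := (hpos _ hmem).le
    exact mul_le_mul_of_nonneg_right (le_max_left _ _) this
  -- iteration
  have hiter : ∀ n : ℕ, ∀ r ∈ Ico (0:ℝ) 1,
      tl ω r ≤ C₀ ^ n * tl ω (1 - (1 - r) / 2 ^ n) := by
    intro n
    induction n with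
    | zero => intro r hr; simp
    | succ n ih =>
      intro r hr
      have hrn : (1 - (1 - r) / 2 ^ n) ∈ Ico (0:ℝ) 1 := by
        have h1 : (1 - r) / 2 ^ n ≤ 1 - r :=
          div_le_self (by linarith [hr.2]) (one_le_pow₀ one_le_two)
        have h2 : 0 < (1 - r) / 2 ^ n :=
          div_pos (by linarith [hr.2]) (by positivity)
        constructor <;> [linarith [hr.1]; linarith]
      have step := hdbl' _ hrn
      have heq : (1 + (1 - (1 - r) / 2 ^ n)) / 2 = 1 - (1 - r) / 2 ^ (n + 1) := by
        field_simp
        ring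
      rw [heq] at step
      calc tl ω r ≤ C₀ ^ n * tl ω (1 - (1 - r) / 2 ^ n) := ih r hr
        _ ≤ C₀ ^ n * (C₀ * tl ω (1 - (1 - r) / 2 ^ (n + 1))) :=
            mul_le_mul_of_nonneg_left step (by positivity)
        _ = C₀ ^ (n + 1) * tl ω (1 - (1 - r) / 2 ^ (n + 1)) := by ring
  refine ⟨C₀, by linarith, Real.logb 2 C₀, Real.logb_pos one_lt_two hC₀1, ?_⟩
  intro r t hr hrt ht1
  set q : ℝ := (1 - r) / (1 - t) with hqdef
  have h1t : 0 < 1 - t := by linarith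
  have hq1 : 1 ≤ q := (le_div_iff₀ h1t).2 (by linarith)
  have hq0 : 0 < q := by linarith
  set n : ℕ := ⌈Real.logb 2 q⌉₊ with hndef
  have hlogq0 : 0 ≤ Real.logb 2 q := Real.logb_nonneg one_lt_two hq1
  have h2n : q ≤ 2 ^ n := by
    have := Nat.le_ceil (Real.logb 2 q)
    have h := (Real.logb_le_iff_le_rpow one_lt_two hq0).1 this
    calc q ≤ (2:ℝ) ^ (n:ℝ) := h
      _ = 2 ^ n := by rw [Real.rpow_natCast]
  have hrn_ge_t : t ≤ 1 - (1 - r) / 2 ^ n := by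
    have h2pow : (0:ℝ) < 2 ^ n := by positivity
    have : (1 - r) / 2 ^ n ≤ 1 - t := by
      rw [div_le_iff₀ h2pow]
      have := (div_le_iff₀ h1t).1 h2n
      linarith
    linarith
  have hrn_lt1 : 1 - (1 - r) / 2 ^ n ≤ 1 := by
    have : 0 < (1 - r) / 2 ^ n := div_pos (by linarith) (by positivity)
    linarith
  have ht0 : 0 ≤ t := hr.trans hrt
  have hCn : C₀ ^ n ≤ C₀ * q ^ (Real.logb 2 C₀) := by
    have hceil : (n:ℝ) ≤ Real.logb 2 q + 1 := by
      have := Nat.ceil_lt_add_one hlogq0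
      exact this.le
    have h1 : (C₀:ℝ) ^ n = C₀ ^ ((n:ℝ)) := by rw [Real.rpow_natCast]
    rw [h1]
    calc C₀ ^ ((n:ℝ)) ≤ C₀ ^ (Real.logb 2 q + 1) :=
          Real.rpow_le_rpow_of_exponent_le hC₀1.le hceil
      _ = C₀ ^ (Real.logb 2 q) * C₀ := by
          rw [Real.rpow_add hC₀0, Real.rpow_one]
      _ = C₀ * q ^ (Real.logb 2 C₀) := by
          rw [mul_comm]
          congr 1
          rw [Real.rpow_def_of_pos hC₀0, Real.rpow_def_of_pos hq0]
          congr 1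
          unfold Real.logb
          field_simp
  have htpos := hpos t ⟨ht0, ht1⟩
  calc tl ω r ≤ C₀ ^ n * tl ω (1 - (1 - r) / 2 ^ n) := hiter n r ⟨hr, by linarith⟩
    _ ≤ C₀ ^ n * tl ω t :=
        mul_le_mul_of_nonneg_left (hmono t _ ht0 hrn_ge_t hrn_lt1) (by positivity)
    _ ≤ (C₀ * q ^ (Real.logb 2 C₀)) * tl ω t :=
        mul_le_mul_of_nonneg_right hCn htpos.le
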